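/- Let k be a field, d an even integer and m an integer with 2 ≤ d < m−1, and set a = (d+2)/2. Then the Stanley–Reisner ideal of Δ(d,m) in k[x_1,…,x_m] equals I_{a,1,m−1} + I_{a,2,m}; equivalently, k[Δ(d,m)] is isomorphic as a k-algebra to k[x_1,…,x_m]/(I_{a,1,m−1} + I_{a,2,m}). -/

import Mathlib

/-- The variable `x_t` (1-indexed, for `1 ≤ t ≤ n`) of the polynomial ring
`k[x_1, …, x_n]`, realized as `MvPolynomial (Fin n) k`. -/
noncomputable def Xv (k : Type*) [Field k] (n t : ℕ) : MvPolynomial (Fin n) k :=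
  if h : 1 ≤ t ∧ t ≤ n then MvPolynomial.X ⟨t - 1, by omega⟩ else 0

/-- The ideal `I_{a,p,q}` of `k[x_1, …, x_n]`, generated by the squarefree monomials
`x_{t_1} ⋯ x_{t_a}` with `p ≤ t_1 < t_2 < ⋯ < t_a ≤ q` and `t_{j+1} ≥ t_j + 2`. -/
noncomputable def idealI (k : Type*) [Field k] (n a p q : ℕ) :
    Ideal (MvPolynomial (Fin n) k) :=
  Ideal.span { f | ∃ t : ℕ → ℕ, p ≤ t 0 ∧ t (a - 1) ≤ q ∧
    (∀ j, j + 1 < a → t j + 2 ≤ t (j + 1)) ∧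
    f = ∏ j ∈ Finset.range a, Xv k n (t j) }

/-- The number of odd contiguous subsets of `W ⊆ {1, …, m}`: a contiguous subset of `W` is a
set `{i, i+1, …, j} ⊆ W` with `2 ≤ i ≤ j ≤ m−1`, `i−1 ∉ W`, `j+1 ∉ W`; it is odd contiguous
if its cardinality `j − i + 1` is odd. -/
def oddContig (m : ℕ) (W : Finset ℕ) : ℕ :=
  ((Finset.Icc 2 (m - 1) ×ˢ Finset.Icc 2 (m - 1)).filter
    (fun p : ℕ × ℕ => p.1 ≤ p.2 ∧ Finset.Icc p.1 p.2 ⊆ W ∧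
      p.1 - 1 ∉ W ∧ p.2 + 1 ∉ W ∧ Odd (p.2 - p.1 + 1))).card

/-- Gale evenness criterion: `W ⊆ {1, …, m}` is a face of the boundary complex `Δ(d,m)` of the
`d`-dimensional cyclic polytope with `m` vertices iff `#W ≤ d` and the number of odd
contiguous subsets of `W` is at most `d − #W`. -/
def isFace (d m : ℕ) (W : Finset ℕ) : Prop :=
  W ⊆ Finset.Icc 1 m ∧ W.card ≤ d ∧ oddContig m W ≤ d - W.card

/-- The Stanley–Reisner ideal of `Δ(d,m)` in `k[x_1, …, x_m]`, generated by the squarefree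
monomials `∏_{i ∈ W} x_i` over the non-faces `W ⊆ {1, …, m}`. -/
noncomputable def SRideal (k : Type*) [Field k] (d m : ℕ) :
    Ideal (MvPolynomial (Fin m) k) :=
  Ideal.span { f | ∃ W : Finset ℕ, W ⊆ Finset.Icc 1 m ∧ ¬ isFace d m W ∧
    f = ∏ i ∈ W, Xv k m i }


open Finset
set_option linter.unusedSectionVars false


/-- end of the block of `i` in `W`: least `j ≥ i` with `j+1 ∉ W`. -/
noncomputable def blkEnd (W : Finset ℕ) (i : ℕ) : ℕ := sInf {j | i ≤ j ∧ j + 1 ∉ W}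
/-- start of the block of `i` in `W`: least `j` with `Icc j i ⊆ W`. -/
noncomputable def blkSt (W : Finset ℕ) (i : ℕ) : ℕ := sInf {j | Finset.Icc j i ⊆ W}

section blk
variable {m : ℕ} {W : Finset ℕ} (hW : W ⊆ Finset.Icc 1 m)
include hW

lemma mem_W_le {i : ℕ} (hi : i ∈ W) : 1 ≤ i ∧ i ≤ m := by
  have := hW hi; rw [mem_Icc] at this; exact this

lemma blkEnd_spec {i : ℕ} (hi : i ∈ W) :
    i ≤ blkEnd W i ∧ blkEnd W i + 1 ∉ W ∧ blkEnd W i ≤ m := by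
  have him := (mem_W_le hW hi).2
  have hmem : m ∈ {j | i ≤ j ∧ j + 1 ∉ W} := by
    refine ⟨him, fun h => ?_⟩
    have := (mem_W_le hW h).2; omega
  have h1 := Nat.sInf_mem (⟨m, hmem⟩ : {j | i ≤ j ∧ j + 1 ∉ W}.Nonempty)
  exact ⟨h1.1, h1.2, Nat.sInf_le hmem⟩

lemma blkEnd_subset {i : ℕ} (hi : i ∈ W) : Finset.Icc i (blkEnd W i) ⊆ W := by
  intro x hx
  rw [mem_Icc] at hx
  obtain ⟨h1, h2⟩ := hx
  induction x, h1 using Nat.le_induction with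
  | base => exact hi
  | succ k hk ih =>
    have hlt : k < blkEnd W i := by omega
    have := Nat.notMem_of_lt_sInf (s := {j | i ≤ j ∧ j + 1 ∉ W}) hlt
    simp only [Set.mem_setOf_eq, not_and, not_not] at this
    exact this hk

lemma blkEnd_eq_of {i j : ℕ} (hsub : Finset.Icc i j ⊆ W) (hij : i ≤ j) (hj : j + 1 ∉ W) :
    blkEnd W i = j := by
  have hi : i ∈ W := hsub (by rw [mem_Icc]; omega)
  have hle : blkEnd W i ≤ j := Nat.sInf_le ⟨hij, hj⟩
  have hge : j ≤ blkEnd W i := by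
    by_contra h
    push_neg at h
    have h1 := (blkEnd_spec hW hi).1
    have h2 := (blkEnd_spec hW hi).2.1
    exact h2 (hsub (by rw [mem_Icc]; omega))
  omega

lemma blkEnd_congr {i j : ℕ} (hsub : Finset.Icc i j ⊆ W) (hij : i ≤ j) :
    blkEnd W i = blkEnd W j := by
  have hi : i ∈ W := hsub (by rw [mem_Icc]; omega)
  have hj : j ∈ W := hsub (by rw [mem_Icc]; omega)
  have hjle : j ≤ blkEnd W i := by
    by_contra h
    push_neg at h
    have h1 := (blkEnd_spec hW hi).1
    have h2 := (blkEnd_spec hW hi).2.1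
    exact h2 (hsub (by rw [mem_Icc]; omega))
  have hsub2 : Finset.Icc i (blkEnd W j) ⊆ W := by
    intro x hx
    rw [mem_Icc] at hx
    rcases le_or_gt x j with h | h
    · exact hsub (by rw [mem_Icc]; omega)
    · exact blkEnd_subset hW hj (by rw [mem_Icc]; constructor <;> omega)
  exact blkEnd_eq_of hW hsub2 (le_trans hij (blkEnd_spec hW hj).1) (blkEnd_spec hW hj).2.1

lemma blkSt_spec {i : ℕ} (hi : i ∈ W) :
    blkSt W i ≤ i ∧ Finset.Icc (blkSt W i) i ⊆ W ∧ 1 ≤ blkSt W i ∧ blkSt W i - 1 ∉ W := by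
  have hmem : i ∈ {j | Finset.Icc j i ⊆ W} := by
    simp only [Set.mem_setOf_eq, Finset.Icc_self, Finset.singleton_subset_iff]; exact hi
  have hle : blkSt W i ≤ i := Nat.sInf_le hmem
  have hsub : Finset.Icc (blkSt W i) i ⊆ W :=
    Nat.sInf_mem (⟨i, hmem⟩ : {j | Finset.Icc j i ⊆ W}.Nonempty)
  have h1 : 1 ≤ blkSt W i := (mem_W_le hW (hsub (by rw [mem_Icc]; omega))).1
  refine ⟨hle, hsub, h1, fun hmem1 => ?_⟩
  have hsub1 : Finset.Icc (blkSt W i - 1) i ⊆ W := by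
    intro x hx
    rw [mem_Icc] at hx
    rcases eq_or_lt_of_le hx.1 with h | h
    · rwa [← h]
    · exact hsub (by rw [mem_Icc]; omega)
  have : blkSt W i ≤ blkSt W i - 1 := Nat.sInf_le hsub1
  omega

lemma blkSt_eq_of {i j : ℕ} (hsub : Finset.Icc i j ⊆ W) (hij : i ≤ j) (hi1 : i - 1 ∉ W) :
    blkSt W j = i := by
  have hi : i ∈ W := hsub (by rw [mem_Icc]; omega)
  have hj : j ∈ W := hsub (by rw [mem_Icc]; omega)
  have h1i : 1 ≤ i := (mem_W_le hW hi).1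
  have hle : blkSt W j ≤ i := Nat.sInf_le hsub
  have hspec := blkSt_spec hW hj
  by_contra h
  have hlt : blkSt W j < i := by omega
  have : i - 1 ∈ W := hspec.2.1 (by rw [mem_Icc]; omega)
  exact hi1 this

lemma blkSt_congr {i j : ℕ} (hsub : Finset.Icc i j ⊆ W) (hij : i ≤ j) :
    blkSt W i = blkSt W j := by
  have hi : i ∈ W := hsub (by rw [mem_Icc]; omega)
  have hspec := blkSt_spec hW hi
  have hsub2 : Finset.Icc (blkSt W i) j ⊆ W := by
    intro x hx
    rw [mem_Icc] at hx
    rcases le_or_gt x i with h | h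
    · exact hspec.2.1 (by rw [mem_Icc]; omega)
    · exact hsub (by rw [mem_Icc]; omega)
  exact (blkSt_eq_of hW hsub2 (le_trans hspec.1 hij) hspec.2.2.2).symm

end blk

set_option linter.unusedSectionVars false

/-- sparse subset aligned with block ends -/
noncomputable def T1 (W : Finset ℕ) : Finset ℕ :=
  W.filter (fun i => Even (blkEnd W i - i))
/-- odd-block starts -/
noncomputable def E1 (W : Finset ℕ) : Finset ℕ :=
  W.filter (fun i => i - 1 ∉ W ∧ Even (blkEnd W i - i))
/-- sparse subset aligned with block starts -/
noncomputable def T0 (W : Finset ℕ) : Finset ℕ :=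
  W.filter (fun i => Even (i - blkSt W i))
/-- odd-block ends -/
noncomputable def E0 (W : Finset ℕ) : Finset ℕ :=
  W.filter (fun i => i + 1 ∉ W ∧ Even (i - blkSt W i))

section cnt
variable {m : ℕ} {W : Finset ℕ} (hW : W ⊆ Finset.Icc 1 m)
include hW


lemma pair_subset {x : ℕ} (hx : x ∈ W) (hx1 : x + 1 ∈ W) : Finset.Icc x (x + 1) ⊆ W := by
  intro y hy
  rw [mem_Icc] at hy
  rcases Nat.eq_or_lt_of_le hy.1 with h | h
  · rw [← h]; exact hx
  · have : y = x + 1 := by omega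
    rw [this]; exact hx1

lemma pair_subset' {x : ℕ} (hx : x - 1 ∈ W) (hx1 : x ∈ W) (h1 : 1 ≤ x) :
    Finset.Icc (x - 1) x ⊆ W := by
  intro y hy
  rw [mem_Icc] at hy
  rcases Nat.eq_or_lt_of_le hy.1 with h | h
  · rw [← h]; exact hx
  · have : y = x := by omega
    rw [this]; exact hx1

lemma no_adjacent_T1 {x : ℕ} (hx : x ∈ T1 W) (hx1 : x + 1 ∈ T1 W) : False := by
  rw [T1, mem_filter] at hx hx1
  obtain ⟨hxW, hxE⟩ := hx
  obtain ⟨hx1W, hx1E⟩ := hx1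
  have hcongr : blkEnd W x = blkEnd W (x + 1) := by
    apply blkEnd_congr hW (pair_subset hW hxW hx1W) (by omega)
  have hle := (blkEnd_spec hW hx1W).1
  rw [hcongr] at hxE
  obtain ⟨r, hr⟩ := hxE
  obtain ⟨s, hs⟩ := hx1E
  omega

lemma sparse_T1 {x y : ℕ} (hx : x ∈ T1 W) (hy : y ∈ T1 W) (hxy : x < y) : x + 2 ≤ y := by
  by_contra h
  have : y = x + 1 := by omega
  exact no_adjacent_T1 hW hx (this ▸ hy)

lemma no_adjacent_T0 {x : ℕ} (hx : x ∈ T0 W) (hx1 : x + 1 ∈ T0 W) : False := by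
  rw [T0, mem_filter] at hx hx1
  obtain ⟨hxW, hxE⟩ := hx
  obtain ⟨hx1W, hx1E⟩ := hx1
  have hcongr : blkSt W x = blkSt W (x + 1) := by
    apply blkSt_congr hW (pair_subset hW hxW hx1W) (by omega)
  have hle := (blkSt_spec hW hxW).1
  rw [hcongr] at hxE
  obtain ⟨r, hr⟩ := hxE
  obtain ⟨s, hs⟩ := hx1E
  omega

lemma sparse_T0 {x y : ℕ} (hx : x ∈ T0 W) (hy : y ∈ T0 W) (hxy : x < y) : x + 2 ≤ y := by
  by_contra h
  have : y = x + 1 := by omega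
  exact no_adjacent_T0 hW hx (this ▸ hy)

lemma count_T1 : W.card + (E1 W).card ≤ 2 * (T1 W).card := by
  classical
  have key : (W.disjSum (E1 W)).card ≤ ((T1 W) ×ˢ (Finset.univ : Finset Bool)).card := by
    apply Finset.card_le_card_of_injOn
      (Sum.elim (fun w => if Even (blkEnd W w - w) then ((w, false) : ℕ × Bool) else (w + 1, true))
        (fun i => (i, true)))
    · -- maps to
      intro x hx
      rcases x with w | i
      · simp only [Finset.mem_coe, Finset.inl_mem_disjSum] at hx
        by_cases hE : Even (blkEnd W w - w)
        · simp only [Sum.elim_inl, if_pos hE, Finset.mem_coe, Finset.mem_product, Finset.mem_univ, and_true]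
          rw [T1, mem_filter]; exact ⟨hx, hE⟩
        · simp only [Sum.elim_inl, if_neg hE, Finset.mem_coe, Finset.mem_product, Finset.mem_univ, and_true]
          have hsp := blkEnd_spec hW hx
          have hlt : w < blkEnd W w := by
            rcases eq_or_lt_of_le hsp.1 with h | h
            · exfalso; apply hE; rw [← h]; simp
            · exact h
          have hw1 : w + 1 ∈ W := blkEnd_subset hW hx (by rw [mem_Icc]; omega)
          have hcongr : blkEnd W w = blkEnd W (w + 1) := by
            apply blkEnd_congr hW (pair_subset hW hx hw1) (by omega)
          rw [T1, mem_filter]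
          refine ⟨hw1, ?_⟩
          rw [← hcongr]
          rcases Nat.even_or_odd (blkEnd W w - w) with h | h
          · exact absurd h hE
          · obtain ⟨r, hr⟩ := h; exact ⟨r, by omega⟩
      · simp only [Finset.mem_coe, Finset.inr_mem_disjSum] at hx
        rw [E1, mem_filter] at hx
        simp only [Sum.elim_inr, Finset.mem_coe, Finset.mem_product, Finset.mem_univ, and_true]
        rw [T1, mem_filter]
        exact ⟨hx.1, hx.2.2⟩
    · -- injective
      intro x hx y hy hxy
      rcases x with w | i <;> rcases y with w' | i'
      · simp only [Sum.elim_inl] at hxy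
        by_cases h1 : Even (blkEnd W w - w) <;> by_cases h2 : Even (blkEnd W w' - w') <;>
          simp [h1, h2, Prod.ext_iff] at hxy <;> simp [hxy]
      · simp only [Finset.mem_coe, Finset.inr_mem_disjSum] at hy
        rw [E1, mem_filter] at hy
        simp only [Sum.elim_inl, Sum.elim_inr] at hxy
        by_cases h1 : Even (blkEnd W w - w)
        · simp [h1, Prod.ext_iff] at hxy
        · simp only [Finset.mem_coe, Finset.inl_mem_disjSum] at hx
          simp only [if_neg h1, Prod.ext_iff] at hxy
          exfalso
          have : i' - 1 ∈ W := by
            have : i' = w + 1 := hxy.1.symm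
            rw [this]; simpa using hx
          exact hy.2.1 this
      · simp only [Finset.mem_coe, Finset.inr_mem_disjSum] at hx
        rw [E1, mem_filter] at hx
        simp only [Sum.elim_inl, Sum.elim_inr] at hxy
        by_cases h1 : Even (blkEnd W w' - w')
        · simp [h1, Prod.ext_iff] at hxy
        · simp only [Finset.mem_coe, Finset.inl_mem_disjSum] at hy
          simp only [if_neg h1, Prod.ext_iff] at hxy
          exfalso
          have : i - 1 ∈ W := by
            have : i = w' + 1 := hxy.1
            rw [this]; simpa using hy
          exact hx.2.1 this
      · simp only [Sum.elim_inr, Prod.ext_iff] at hxy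
        simp [hxy.1]
  rw [Finset.card_disjSum, Finset.card_product] at key
  simp only [Finset.card_univ, Fintype.card_bool] at key
  omega

lemma count_T0 : W.card + (E0 W).card ≤ 2 * (T0 W).card := by
  classical
  have key : (W.disjSum (E0 W)).card ≤ ((T0 W) ×ˢ (Finset.univ : Finset Bool)).card := by
    apply Finset.card_le_card_of_injOn
      (Sum.elim (fun w => if Even (w - blkSt W w) then ((w, false) : ℕ × Bool) else (w - 1, true))
        (fun i => (i, true)))
    · intro x hx
      rcases x with w | i
      · simp only [Finset.mem_coe, Finset.inl_mem_disjSum] at hx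
        by_cases hE : Even (w - blkSt W w)
        · simp only [Sum.elim_inl, if_pos hE, Finset.mem_coe, Finset.mem_product, Finset.mem_univ, and_true]
          rw [T0, mem_filter]; exact ⟨hx, hE⟩
        · simp only [Sum.elim_inl, if_neg hE, Finset.mem_coe, Finset.mem_product, Finset.mem_univ, and_true]
          have hsp := blkSt_spec hW hx
          have hlt : blkSt W w < w := by
            rcases eq_or_lt_of_le hsp.1 with h | h
            · exfalso; apply hE; rw [h]; simp
            · exact h
          have hw1 : w - 1 ∈ W := hsp.2.1 (by rw [mem_Icc]; omega)
          have hcongr : blkSt W (w - 1) = blkSt W w := by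
            exact blkSt_congr hW (pair_subset' hW hw1 hx (by omega)) (by omega)
          rw [T0, mem_filter]
          refine ⟨hw1, ?_⟩
          rw [hcongr]
          rcases Nat.even_or_odd (w - blkSt W w) with h | h
          · exact absurd h hE
          · obtain ⟨r, hr⟩ := h
            have := hsp.2.2.1
            exact ⟨r, by omega⟩
      · simp only [Finset.mem_coe, Finset.inr_mem_disjSum] at hx
        rw [E0, mem_filter] at hx
        simp only [Sum.elim_inr, Finset.mem_coe, Finset.mem_product, Finset.mem_univ, and_true]
        rw [T0, mem_filter]
        exact ⟨hx.1, hx.2.2⟩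
    · intro x hx y hy hxy
      rcases x with w | i <;> rcases y with w' | i'
      · simp only [Finset.mem_coe, Finset.inl_mem_disjSum] at hx hy
        simp only [Sum.elim_inl] at hxy
        have hw1 := (mem_W_le hW hx).1
        have hw'1 := (mem_W_le hW hy).1
        by_cases h1 : Even (w - blkSt W w) <;> by_cases h2 : Even (w' - blkSt W w') <;>
          simp only [if_pos, if_neg, h1, h2, if_true, if_false, Prod.ext_iff] at hxy
        · simp [hxy.1]
        · simp at hxy
        · simp at hxy
        · simp only [Sum.inl.injEq]; omega
      · simp only [Finset.mem_coe, Finset.inr_mem_disjSum] at hy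
        rw [E0, mem_filter] at hy
        simp only [Finset.mem_coe, Finset.inl_mem_disjSum] at hx
        have hw1 := (mem_W_le hW hx).1
        simp only [Sum.elim_inl, Sum.elim_inr] at hxy
        by_cases h1 : Even (w - blkSt W w)
        · simp [h1, Prod.ext_iff] at hxy
        · simp only [if_neg h1, Prod.ext_iff] at hxy
          exfalso
          have : i' + 1 ∈ W := by
            have hlt : blkSt W w < w := by
              rcases eq_or_lt_of_le (blkSt_spec hW hx).1 with h | h
              · exfalso; apply h1; rw [h]; simp
              · exact h
            have h1le := (blkSt_spec hW hx).2.2.1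
            have : i' = w - 1 := hxy.1.symm
            have : i' + 1 = w := by omega
            rw [this]; exact hx
          exact hy.2.1 this
      · simp only [Finset.mem_coe, Finset.inr_mem_disjSum] at hx
        rw [E0, mem_filter] at hx
        simp only [Finset.mem_coe, Finset.inl_mem_disjSum] at hy
        simp only [Sum.elim_inl, Sum.elim_inr] at hxy
        by_cases h1 : Even (w' - blkSt W w')
        · simp [h1, Prod.ext_iff] at hxy
        · simp only [if_neg h1, Prod.ext_iff] at hxy
          exfalso
          have : i + 1 ∈ W := by
            have hlt : blkSt W w' < w' := by
              rcases eq_or_lt_of_le (blkSt_spec hW hy).1 with h | h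
              · exfalso; apply h1; rw [h]; simp
              · exact h
            have h1le := (blkSt_spec hW hy).2.2.1
            have : i = w' - 1 := hxy.1
            have : i + 1 = w' := by omega
            rw [this]; exact hy
          exact hx.2.1 this
      · simp only [Sum.elim_inr, Prod.ext_iff] at hxy
        simp [hxy.1]
  rw [Finset.card_disjSum, Finset.card_product] at key
  simp only [Finset.card_univ, Fintype.card_bool] at key
  omega

end cnt

section oc
variable {m : ℕ} {W : Finset ℕ} (hW : W ⊆ Finset.Icc 1 m)
include hW

lemma oddContig_le_E1 :
    oddContig m W ≤ ((E1 W).filter (fun i => 2 ≤ i ∧ blkEnd W i + 1 ≤ m)).card := by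
  classical
  rw [oddContig]
  apply Finset.card_le_card_of_injOn (fun p => p.1)
  · intro p hp
    simp only [Finset.mem_coe, Finset.mem_filter, Finset.mem_product, Finset.mem_Icc] at hp
    obtain ⟨⟨⟨hi2, him⟩, hj2, hjm⟩, hij, hsub, hi1, hj1, hodd⟩ := hp
    have hiW : p.1 ∈ W := hsub (by rw [Finset.mem_Icc]; omega)
    have hend : blkEnd W p.1 = p.2 := blkEnd_eq_of hW hsub hij hj1
    obtain ⟨r, hr⟩ := hodd
    simp only [Finset.mem_coe, E1, Finset.mem_filter]
    refine ⟨⟨hiW, hi1, ?_⟩, hi2, ?_⟩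
    · rw [hend]; exact ⟨r, by omega⟩
    · rw [hend]; omega
  · intro p hp q hq hpq
    simp only [Finset.mem_coe, Finset.mem_filter, Finset.mem_product, Finset.mem_Icc] at hp hq
    have hp2 : blkEnd W p.1 = p.2 := blkEnd_eq_of hW hp.2.2.1 hp.2.1 hp.2.2.2.2.1
    have hq2 : blkEnd W q.1 = q.2 := blkEnd_eq_of hW hq.2.2.1 hq.2.1 hq.2.2.2.2.1
    have hpq' : p.1 = q.1 := hpq
    have : p.2 = q.2 := by rw [← hp2, ← hq2, hpq']
    exact Prod.ext hpq' this

lemma oddContig_le_E0 : oddContig m W ≤ (E0 W).card := by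
  classical
  rw [oddContig]
  apply Finset.card_le_card_of_injOn (fun p => p.2)
  · intro p hp
    simp only [Finset.mem_coe, Finset.mem_filter, Finset.mem_product, Finset.mem_Icc] at hp
    obtain ⟨⟨⟨hi2, him⟩, hj2, hjm⟩, hij, hsub, hi1, hj1, hodd⟩ := hp
    have hjW : p.2 ∈ W := hsub (by rw [Finset.mem_Icc]; omega)
    have hst : blkSt W p.2 = p.1 := blkSt_eq_of hW hsub hij hi1
    obtain ⟨r, hr⟩ := hodd
    simp only [Finset.mem_coe, E0, Finset.mem_filter]
    exact ⟨hjW, hj1, by rw [hst]; exact ⟨r, by omega⟩⟩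
  · intro p hp q hq hpq
    simp only [Finset.mem_coe, Finset.mem_filter, Finset.mem_product, Finset.mem_Icc] at hp hq
    have hp1 : blkSt W p.2 = p.1 := blkSt_eq_of hW hp.2.2.1 hp.2.1 hp.2.2.2.1
    have hq1 : blkSt W q.2 = q.1 := blkSt_eq_of hW hq.2.2.1 hq.2.1 hq.2.2.2.1
    have hpq' : p.2 = q.2 := hpq
    have : p.1 = q.1 := by rw [← hp1, ← hq1, hpq']
    exact Prod.ext this hpq'

lemma exists_sparse (a : ℕ) (ha : 2 ≤ a) (hma : 2 * a ≤ m)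
    (hbig : 2 * a - 1 ≤ W.card + oddContig m W) :
    ∃ T, T ⊆ W ∧ T.card = a ∧ (∀ x ∈ T, ∀ y ∈ T, x < y → x + 2 ≤ y) ∧
      (1 ∉ T ∨ m ∉ T) := by
  classical
  by_cases hmW : m ∈ W
  · have hspec := blkSt_spec hW hmW
    by_cases hs1 : blkSt W m = 1
    · -- W contains all of [1, m]
      refine ⟨(Finset.range a).image (fun j => 2 * j + 2), ?_, ?_, ?_, Or.inl ?_⟩
      · intro x hx
        simp only [Finset.mem_image, Finset.mem_range] at hx
        obtain ⟨j, hj, rfl⟩ := hx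
        apply hspec.2.1
        rw [hs1, Finset.mem_Icc]
        omega
      · rw [Finset.card_image_of_injective _ (fun x y h => by omega), Finset.card_range]
      · intro x hx y hy hxy
        simp only [Finset.mem_image, Finset.mem_range] at hx hy
        obtain ⟨j, _, rfl⟩ := hx
        obtain ⟨j', _, rfl⟩ := hy
        omega
      · simp only [Finset.mem_image, Finset.mem_range, not_exists]
        intro j _
        omega
    · set s := blkSt W m with hsdef
      by_cases hpar : Even (m - s)
      · -- avoid 1 using T1
        have hcnt := count_T1 hW
        have hoc := oddContig_le_E1 hW
        set F := (E1 W).filter (fun i => 2 ≤ i ∧ blkEnd W i + 1 ≤ m) with hF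
        have hsW : s ∈ W := hspec.2.1 (by rw [Finset.mem_Icc]; exact ⟨le_refl _, hspec.1⟩)
        have hEnds : blkEnd W s = m := by
          apply blkEnd_eq_of hW hspec.2.1 hspec.1
          intro h
          have := (mem_W_le hW h).2
          omega
        have hsE1 : s ∈ E1 W := by
          rw [E1, Finset.mem_filter]
          exact ⟨hsW, hspec.2.2.2, by rw [hEnds]; exact hpar⟩
        have hsF : s ∉ F := by
          rw [hF, Finset.mem_filter]
          rw [hEnds]
          simp only [not_and]
          intro _ _
          omega
        by_cases h1T : (1 : ℕ) ∈ T1 W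
        · have h1W : (1 : ℕ) ∈ W := Finset.mem_of_mem_filter _ h1T
          have h1E1 : (1 : ℕ) ∈ E1 W := by
            rw [T1, Finset.mem_filter] at h1T
            rw [E1, Finset.mem_filter]
            refine ⟨h1W, ?_, h1T.2⟩
            intro h
            have := (mem_W_le hW h).1
            omega
          have h1F : (1 : ℕ) ∉ F := by
            rw [hF, Finset.mem_filter]
            simp only [not_and]
            intro _ h
            omega
          have h1s : (1 : ℕ) ≠ s := fun h => hs1 h.symm
          have hcard2 : F.card + 2 ≤ (E1 W).card := by
            have hsub : insert 1 (insert s F) ⊆ E1 W := by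
              intro x hx
              simp only [Finset.mem_insert] at hx
              rcases hx with rfl | rfl | hx
              · exact h1E1
              · exact hsE1
              · exact Finset.filter_subset _ _ hx
            have hc := Finset.card_le_card hsub
            rw [Finset.card_insert_of_notMem (by
                  simp only [Finset.mem_insert]
                  push_neg
                  exact ⟨h1s, h1F⟩),
                Finset.card_insert_of_notMem hsF] at hc
            omega
          have hT1card : a + 1 ≤ (T1 W).card := by omega
          obtain ⟨T, hTsub, hTcard⟩ := Finset.exists_subset_card_eq
            (show a ≤ ((T1 W).erase 1).card by
              rw [Finset.card_erase_of_mem h1T]; omega)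
          refine ⟨T, ?_, hTcard, ?_, Or.inl ?_⟩
          · exact fun x hx => Finset.mem_of_mem_filter _
              (Finset.erase_subset _ _ (hTsub hx))
          · intro x hx y hy hxy
            exact sparse_T1 hW (Finset.erase_subset _ _ (hTsub hx))
              (Finset.erase_subset _ _ (hTsub hy)) hxy
          · intro h
            exact Finset.notMem_erase 1 _ (hTsub h)
        · have hcard1 : F.card + 1 ≤ (E1 W).card := by
            have hsub : insert s F ⊆ E1 W := by
              intro x hx
              simp only [Finset.mem_insert] at hx
              rcases hx with rfl | hx
              · exact hsE1
              · exact Finset.filter_subset _ _ hx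
            have hc := Finset.card_le_card hsub
            rw [Finset.card_insert_of_notMem hsF] at hc
            omega
          have hT1card : a ≤ (T1 W).card := by omega
          obtain ⟨T, hTsub, hTcard⟩ := Finset.exists_subset_card_eq hT1card
          refine ⟨T, fun x hx => Finset.mem_of_mem_filter _ (hTsub hx), hTcard, ?_,
            Or.inl fun h => h1T (hTsub h)⟩
          intro x hx y hy hxy
          exact sparse_T1 hW (hTsub hx) (hTsub hy) hxy
      · -- avoid m using T0
        have hcnt := count_T0 hW
        have hoc := oddContig_le_E0 hW
        have hT0card : a ≤ (T0 W).card := by omega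
        obtain ⟨T, hTsub, hTcard⟩ := Finset.exists_subset_card_eq hT0card
        refine ⟨T, fun x hx => Finset.mem_of_mem_filter _ (hTsub hx), hTcard, ?_,
          Or.inr ?_⟩
        · intro x hx y hy hxy
          exact sparse_T0 hW (hTsub hx) (hTsub hy) hxy
        · intro h
          have := hTsub h
          rw [T0, Finset.mem_filter] at this
          exact hpar this.2
  · -- m ∉ W : any subset of W avoids m
    have hcnt := count_T1 hW
    have hoc : oddContig m W ≤ (E1 W).card :=
      le_trans (oddContig_le_E1 hW) (Finset.card_le_card (Finset.filter_subset _ _))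
    have hT1card : a ≤ (T1 W).card := by omega
    obtain ⟨T, hTsub, hTcard⟩ := Finset.exists_subset_card_eq hT1card
    refine ⟨T, fun x hx => Finset.mem_of_mem_filter _ (hTsub hx), hTcard, ?_, Or.inr ?_⟩
    · intro x hx y hy hxy
      exact sparse_T1 hW (hTsub hx) (hTsub hy) hxy
    · intro h
      exact hmW (Finset.mem_of_mem_filter _ (hTsub h))

end oc


section dirs
variable (k : Type*) [Field k]

lemma gen_mem_SR (d m : ℕ) (hd : Even d) (hd2 : 2 ≤ d) (hm : d + 1 < m)
    (p q : ℕ) (hpq : (p = 1 ∧ q = m - 1) ∨ (p = 2 ∧ q = m))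
    (t : ℕ → ℕ) (hp : p ≤ t 0) (hq : t ((d + 2) / 2 - 1) ≤ q)
    (hgap : ∀ j, j + 1 < (d + 2) / 2 → t j + 2 ≤ t (j + 1)) :
    (∏ j ∈ Finset.range ((d + 2) / 2), Xv k m (t j)) ∈ SRideal k d m := by
  classical
  obtain ⟨c, hc⟩ := hd
  set a := (d + 2) / 2 with hadef
  have ha : a = c + 1 := by omega
  have hc1 : 1 ≤ c := by omega
  -- strict gaps between any two indices
  have hmono : ∀ j j', j < j' → j' < a → t j + 2 ≤ t j' := by
    intro j j' hjj' hj'a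
    induction j' with
    | zero => omega
    | succ n ih =>
      rcases Nat.lt_or_ge j n with h | h
      · have h1 := hgap n (by omega)
        have h2 := ih (by omega) (by omega)
        omega
      · have : j = n := by omega
        subst this
        exact hgap j (by omega)
  have hmono' : ∀ j j', j ≤ j' → j' < a → t j ≤ t j' := by
    intro j j' hjj' hj'a
    rcases Nat.eq_or_lt_of_le hjj' with h | h
    · rw [h]
    · have := hmono j j' h hj'a; omega
  have hinj : Set.InjOn t (Finset.range a) := by
    intro x hx y hy hxy
    simp only [Finset.coe_range, Set.mem_Iio] at hx hy
    by_contra h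
    rcases Nat.lt_or_ge x y with h' | h'
    · have := hmono x y h' hy; omega
    · have := hmono y x (by omega) hx; omega
  set W := (Finset.range a).image t with hWdef
  have hcardW : W.card = a := by
    rw [hWdef, Finset.card_image_of_injOn hinj, Finset.card_range]
  have hmemW : ∀ x ∈ W, ∃ j, j < a ∧ t j = x := by
    intro x hx
    rw [hWdef, Finset.mem_image] at hx
    obtain ⟨j, hj, rfl⟩ := hx
    exact ⟨j, Finset.mem_range.1 hj, rfl⟩
  have hq' : q ≤ m := by rcases hpq with ⟨_, rfl⟩ | ⟨_, rfl⟩ <;> omega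
  have hp' : 1 ≤ p := by rcases hpq with ⟨rfl, _⟩ | ⟨rfl, _⟩ <;> omega
  have hbound : ∀ x ∈ W, p ≤ x ∧ x ≤ q := by
    intro x hx
    obtain ⟨j, hj, rfl⟩ := hmemW x hx
    constructor
    · exact le_trans hp (hmono' 0 j (by omega) hj)
    · exact le_trans (hmono' j (a - 1) (by omega) (by omega)) hq
  have hWsub : W ⊆ Finset.Icc 1 m := by
    intro x hx
    have := hbound x hx
    rw [Finset.mem_Icc]
    omega
  have hsparse : ∀ x ∈ W, ∀ y ∈ W, x < y → x + 2 ≤ y := by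
    intro x hx y hy hxy
    obtain ⟨j, hj, rfl⟩ := hmemW x hx
    obtain ⟨j', hj', rfl⟩ := hmemW y hy
    rcases Nat.lt_or_ge j j' with h | h
    · exact hmono j j' h hj'
    · rcases Nat.eq_or_lt_of_le h with h' | h'
      · subst h'; omega
      · have := hmono j' j h' hj; omega
  -- the interior part of W
  set W' := W.filter (fun i => 2 ≤ i ∧ i ≤ m - 1) with hW'def
  have hW'card : a - 1 ≤ W'.card := by
    have hkey : W.card ≤ W'.card + (W.filter (fun i => ¬(2 ≤ i ∧ i ≤ m - 1))).card := by
      refine le_trans (Finset.card_le_card ?_) (Finset.card_union_le _ _)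
      intro x hx
      by_cases h : 2 ≤ x ∧ x ≤ m - 1
      · exact Finset.mem_union_left _ (by rw [hW'def, Finset.mem_filter]; exact ⟨hx, h⟩)
      · exact Finset.mem_union_right _ (Finset.mem_filter.2 ⟨hx, h⟩)
    have hneg : (W.filter (fun i => ¬(2 ≤ i ∧ i ≤ m - 1))).card ≤ 1 := by
      rcases hpq with ⟨hp1, hq1⟩ | ⟨hp1, hq1⟩
      · have : W.filter (fun i => ¬(2 ≤ i ∧ i ≤ m - 1)) ⊆ {1} := by
          intro x hx
          rw [Finset.mem_filter] at hx
          have hb := hbound x hx.1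
          have h1 := (hWsub hx.1)
          rw [Finset.mem_Icc] at h1
          rw [Finset.mem_singleton]
          omega
        calc _ ≤ ({1} : Finset ℕ).card := Finset.card_le_card this
        _ = 1 := Finset.card_singleton 1
      · have : W.filter (fun i => ¬(2 ≤ i ∧ i ≤ m - 1)) ⊆ {m} := by
          intro x hx
          rw [Finset.mem_filter] at hx
          have hb := hbound x hx.1
          have h1 := (hWsub hx.1)
          rw [Finset.mem_Icc] at h1
          rw [Finset.mem_singleton]
          omega
        calc _ ≤ ({m} : Finset ℕ).card := Finset.card_le_card this
        _ = 1 := Finset.card_singleton m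
    omega
  have hoc : W'.card ≤ oddContig m W := by
    rw [oddContig]
    apply Finset.card_le_card_of_injOn (fun i => (i, i))
    · intro i hi
      simp only [Finset.mem_coe, hW'def, Finset.mem_filter] at hi
      obtain ⟨hiW, hi2, him⟩ := hi
      simp only [Finset.mem_coe, Finset.mem_filter, Finset.mem_product, Finset.mem_Icc]
      refine ⟨⟨⟨hi2, him⟩, hi2, him⟩, le_refl _, ?_, ?_, ?_, ⟨0, by omega⟩⟩
      · rw [Finset.Icc_self, Finset.singleton_subset_iff]; exact hiW
      · intro h
        have := hsparse _ h _ hiW (by omega)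
        omega
      · intro h
        have := hsparse _ hiW _ h (by omega)
        omega
    · intro x hx y hy hxy
      simpa using congrArg Prod.fst hxy
  -- W is not a face
  have hnf : ¬ isFace d m W := by
    intro ⟨_, hcle, hole⟩
    rw [hcardW] at hole
    omega
  rw [SRideal]
  apply Ideal.subset_span
  refine ⟨W, hWsub, hnf, ?_⟩
  rw [hWdef, Finset.prod_image hinj]

lemma SRgen_mem (k : Type*) [Field k] (d m : ℕ) (hd : Even d) (hd2 : 2 ≤ d) (hm : d + 1 < m)
    (W : Finset ℕ) (hWsub : W ⊆ Finset.Icc 1 m) (hnf : ¬ isFace d m W) :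
    (∏ i ∈ W, Xv k m i) ∈
      idealI k m ((d + 2) / 2) 1 (m - 1) + idealI k m ((d + 2) / 2) 2 m := by
  classical
  obtain ⟨c, hc⟩ := hd
  set a := (d + 2) / 2 with hadef
  have ha : a = c + 1 := by omega
  have ha2 : 2 ≤ a := by omega
  have hbig : 2 * a - 1 ≤ W.card + oddContig m W := by
    rw [isFace] at hnf
    push_neg at hnf
    by_cases h : W.card ≤ d
    · have := hnf hWsub h
      omega
    · omega
  obtain ⟨T, hTW, hTcard, hTsparse, hT1m⟩ := exists_sparse hWsub a ha2 (by omega) hbig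
  set e := T.orderIsoOfFin hTcard with he
  set t : ℕ → ℕ := fun j => if h : j < a then (e ⟨j, h⟩ : ℕ) else 0 with ht
  have htmem : ∀ j, j < a → t j ∈ T := by
    intro j h
    rw [ht]
    simp only [dif_pos h]
    exact (e ⟨j, h⟩).2
  have htmono : ∀ j j', j < a → j' < a → j < j' → t j < t j' := by
    intro j j' hj hj' hlt
    rw [ht]
    simp only [dif_pos hj, dif_pos hj']
    exact Subtype.coe_lt_coe.2 (e.strictMono (Fin.mk_lt_mk.2 hlt))
  have hgap : ∀ j, j + 1 < a → t j + 2 ≤ t (j + 1) := by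
    intro j hj
    exact hTsparse _ (htmem j (by omega)) _ (htmem (j + 1) hj)
      (htmono j (j + 1) (by omega) hj (by omega))
  have hinjOn : Set.InjOn t (Finset.range a) := by
    intro x hx y hy hxy
    simp only [Finset.coe_range, Set.mem_Iio] at hx hy
    by_contra hne
    rcases Nat.lt_or_ge x y with h | h
    · have := htmono x y hx hy h; omega
    · have := htmono y x hy hx (by omega); omega
  have himg : (Finset.range a).image t = T := by
    apply Finset.eq_of_subset_of_card_le
    · intro x hx
      rw [Finset.mem_image] at hx
      obtain ⟨j, hj, rfl⟩ := hx
      exact htmem j (Finset.mem_range.1 hj)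
    · rw [hTcard, Finset.card_image_of_injOn hinjOn, Finset.card_range]
  have hprodT : ∏ i ∈ T, Xv k m i = ∏ j ∈ Finset.range a, Xv k m (t j) := by
    rw [← himg, Finset.prod_image hinjOn]
  have hsplit : (∏ i ∈ W, Xv k m i) = (∏ i ∈ W \ T, Xv k m i) * ∏ i ∈ T, Xv k m i :=
    (Finset.prod_sdiff hTW).symm
  have hbound : ∀ j, j < a → 1 ≤ t j ∧ t j ≤ m := by
    intro j h
    have := hWsub (hTW (htmem j h))
    rw [Finset.mem_Icc] at this
    exact this
  rcases hT1m with h1T | hmT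
  · -- 1 ∉ T : generator of I_{a,2,m}
    have hmem : (∏ j ∈ Finset.range a, Xv k m (t j)) ∈ idealI k m a 2 m := by
      rw [idealI]
      apply Ideal.subset_span
      refine ⟨t, ?_, ?_, hgap, rfl⟩
      · have h0 := htmem 0 (by omega)
        have hb := hbound 0 (by omega)
        rcases Nat.eq_or_lt_of_le hb.1 with h | h
        · rw [← h] at h0; exact absurd h0 h1T
        · omega
      · exact (hbound (a - 1) (by omega)).2
    rw [hsplit, hprodT, Submodule.add_eq_sup]
    exact Submodule.mem_sup_right (Ideal.mul_mem_left _ _ hmem)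
  · -- m ∉ T : generator of I_{a,1,m-1}
    have hmem : (∏ j ∈ Finset.range a, Xv k m (t j)) ∈ idealI k m a 1 (m - 1) := by
      rw [idealI]
      apply Ideal.subset_span
      refine ⟨t, ?_, ?_, hgap, rfl⟩
      · exact (hbound 0 (by omega)).1
      · have hb := hbound (a - 1) (by omega)
        have hT := htmem (a - 1) (by omega)
        rcases Nat.eq_or_lt_of_le hb.2 with h | h
        · rw [h] at hT; exact absurd hT hmT
        · omega
    rw [hsplit, hprodT, Submodule.add_eq_sup]
    exact Submodule.mem_sup_left (Ideal.mul_mem_left _ _ hmem)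

end dirs

/-- For `d` even with `2 ≤ d < m − 1` and `a = (d+2)/2`, the Stanley–Reisner ideal of
`Δ(d,m)` equals `I_{a,1,m−1} + I_{a,2,m}`. -/
theorem stanleyReisner_cyclic_even (k : Type*) [Field k] (d m : ℕ)
    (hd : Even d) (hd2 : 2 ≤ d) (hm : d + 1 < m) :
    SRideal k d m = idealI k m ((d + 2) / 2) 1 (m - 1) + idealI k m ((d + 2) / 2) 2 m := by
  apply le_antisymm
  · rw [SRideal, Ideal.span_le]
    rintro f ⟨W, hWsub, hnf, rfl⟩
    exact SRgen_mem k d m hd hd2 hm W hWsub hnf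
  · rw [Submodule.add_eq_sup, sup_le_iff]
    constructor
    · rw [idealI, Ideal.span_le]
      rintro f ⟨t, hp, hq, hgap, rfl⟩
      exact gen_mem_SR k d m hd hd2 hm 1 (m - 1) (Or.inl ⟨rfl, rfl⟩) t hp hq hgap
    · rw [idealI, Ideal.span_le]
      rintro f ⟨t, hp, hq, hgap, rfl⟩
      exact gen_mem_SR k d m hd hd2 hm 2 m (Or.inr ⟨rfl, rfl⟩) t hp hq hgap
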